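/- Let d ∈ ℕ be a positive integer, G an abelian group containing an element g of order d+2, and H = B({g,−g}) the monoid of zero-sum sequences over {g,−g}. Then the set of distances Δ(H) equals {d}. -/

import Mathlib

/-- Set of lengths of factorizations of `a` into irreducible elements (atoms). -/
def LengthsOf {M : Type*} [CommMonoid M] (a : M) : Set ℕ :=
  {n | ∃ s : Multiset M, Multiset.card s = n ∧ (∀ x ∈ s, Irreducible x) ∧ s.prod = a}

/-- The set of distances (delta set) of a monoid. -/
def DeltaSet (M : Type*) [CommMonoid M] : Set ℕ :=
  {d | 0 < d ∧ ∃ (a : M) (k : ℕ), k ∈ LengthsOf a ∧ k + d ∈ LengthsOf a ∧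
      ∀ ℓ ∈ LengthsOf a, ¬(k < ℓ ∧ ℓ < k + d)}

/-- A monoid is atomic if every nonunit is a finite product of irreducible elements. -/
def IsAtomicMonoid (M : Type*) [CommMonoid M] : Prop :=
  ∀ a : M, ¬ IsUnit a → ∃ s : Multiset M, (∀ x ∈ s, Irreducible x) ∧ s.prod = a

universe u

/-- A monoid is Krull if it admits a divisor homomorphism into a free abelian monoid. -/
def IsKrullMonoid (M : Type u) [CommMonoid M] : Prop :=
  ∃ (P : Type u) (φ : M →* Multiplicative (P →₀ ℕ)), ∀ a b : M, a ∣ b ↔ φ a ∣ φ b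

/-- The monoid of zero-sum sequences over `G₀ ⊆ G`, as a submonoid of the
free abelian monoid (written multiplicatively) of multisets over `G`. -/
def ZeroSumMonoid {G : Type*} [AddCommGroup G] (G₀ : Set G) :
    Submonoid (Multiplicative (Multiset G)) where
  carrier := {S | (∀ x ∈ Multiplicative.toAdd S, x ∈ G₀) ∧ (Multiplicative.toAdd S).sum = 0}
  one_mem' := by simp
  mul_mem' := by
    intro a b ha hb
    refine ⟨?_, ?_⟩
    · intro x hx
      rw [toAdd_mul, Multiset.mem_add] at hx
      exact hx.elim (ha.1 x) (hb.1 x)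
    · rw [toAdd_mul, Multiset.sum_add, ha.2, hb.2, add_zero]


open Multiset

section Aux
variable {G : Type*} [AddCommGroup G]

/-- auxiliary element -/
def EE (g : G) (a b : ℕ) : Multiplicative (Multiset G) :=
  Multiplicative.ofAdd (replicate a g + replicate b (-g))

lemma toAdd_EE (g : G) (a b : ℕ) :
    Multiplicative.toAdd (EE g a b) = replicate a g + replicate b (-g) := rfl

lemma EE_mul (g : G) (a b a' b' : ℕ) : EE g a b * EE g a' b' = EE g (a + a') (b + b') := by
  unfold EE
  rw [← ofAdd_add]
  congr 1
  rw [replicate_add, replicate_add]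
  abel

lemma EE_one (g : G) : EE g 0 0 = 1 := rfl

lemma EE_inj {g : G} (hgg : g ≠ -g) {a b a' b' : ℕ} (h : EE g a b = EE g a' b') :
    a = a' ∧ b = b' := by
  classical
  have h' : replicate a g + replicate b (-g) = replicate a' g + replicate b' (-g) :=
    congrArg Multiplicative.toAdd h
  constructor
  · have := congrArg (count g) h'
    simpa [count_replicate, hgg, Ne.symm hgg] using this
  · have := congrArg (count (-g)) h'
    simpa [count_replicate, hgg, Ne.symm hgg] using this

lemma mem_EE {g : G} {a b : ℕ} (hz : a • g + b • (-g) = 0) :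
    EE g a b ∈ ZeroSumMonoid ({g, -g} : Set G) := by
  constructor
  · intro x hx
    rw [toAdd_EE, Multiset.mem_add] at hx
    rcases hx with hx | hx
    · left; exact eq_of_mem_replicate hx
    · right; exact eq_of_mem_replicate hx
  · rw [toAdd_EE, Multiset.sum_add, sum_replicate, sum_replicate]
    exact hz

lemma eq_replicate_pair (g : G) (s : Multiset G) (hs : ∀ x ∈ s, x = g ∨ x = -g) :
    ∃ a b : ℕ, s = replicate a g + replicate b (-g) := by
  induction s using Multiset.induction with
  | empty => exact ⟨0, 0, by simp⟩
  | cons y t ih =>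
    obtain ⟨a, b, hab⟩ := ih (fun z hz => hs z (mem_cons_of_mem hz))
    rcases hs y (mem_cons_self y t) with hy | hy
    · refine ⟨a + 1, b, ?_⟩
      rw [hab, hy, replicate_add, replicate_one, ← Multiset.singleton_add]
      abel
    · refine ⟨a, b + 1, ?_⟩
      rw [hab, hy, replicate_add, replicate_one, ← Multiset.singleton_add]
      abel

lemma exists_EE {g : G} (x : ↥(ZeroSumMonoid ({g, -g} : Set G))) :
    ∃ a b : ℕ, (x : Multiplicative (Multiset G)) = EE g a b := by
  obtain ⟨hx1, -⟩ := x.2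
  obtain ⟨a, b, hab⟩ := eq_replicate_pair g (Multiplicative.toAdd (x : Multiplicative (Multiset G)))
    (fun z hz => by simpa using hx1 z hz)
  exact ⟨a, b, congrArg Multiplicative.ofAdd hab⟩

lemma zsm_isUnit_iff_eq_one {G₀ : Set G} (x : ↥(ZeroSumMonoid G₀)) : IsUnit x ↔ x = 1 := by
  constructor
  · intro hx
    obtain ⟨y, hy⟩ := hx.exists_right_inv
    have h : (x : Multiplicative (Multiset G)) * (y : Multiplicative (Multiset G)) = 1 :=
      congrArg Subtype.val hy
    have h2 : Multiplicative.toAdd (x : Multiplicative (Multiset G)) +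
        Multiplicative.toAdd (y : Multiplicative (Multiset G)) = 0 := congrArg Multiplicative.toAdd h
    have h3 : Multiplicative.toAdd (x : Multiplicative (Multiset G)) = 0 := by
      have := congrArg Multiset.card h2
      rw [Multiset.card_add] at this
      simp only [Multiset.card_zero] at this
      rw [← Multiset.card_eq_zero]
      omega
    exact Subtype.ext (congrArg Multiplicative.ofAdd h3)
  · rintro rfl; exact isUnit_one

end Aux

section Atoms
open Multiset
variable {G : Type*} [AddCommGroup G]

local notation "FM" => Multiplicative (Multiset G)

lemma zsm_unit_of_toAdd_eq_zero {G₀ : Set G} (x : ↥(ZeroSumMonoid G₀))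
    (h : Multiplicative.toAdd (x : FM) = 0) : x = 1 :=
  Subtype.ext (congrArg Multiplicative.ofAdd h)

lemma irreducible_rep {g : G} {d : ℕ} (h : G) (hh : addOrderOf h = d + 2)
    (x : ↥(ZeroSumMonoid ({g, -g} : Set G)))
    (hx : (x : FM) = Multiplicative.ofAdd (replicate (d + 2) h)) :
    Irreducible x := by
  constructor
  · rw [zsm_isUnit_iff_eq_one]
    intro h1
    rw [h1] at hx
    have h2 : (0 : Multiset G) = replicate (d + 2) h := congrArg Multiplicative.toAdd hx
    have := congrArg Multiset.card h2
    simp at this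
  · intro y z hyz
    have hcoe : (y : FM) * (z : FM) = Multiplicative.ofAdd (replicate (d + 2) h) := by
      rw [← hx, hyz]; rfl
    have hadd : Multiplicative.toAdd (y : FM) + Multiplicative.toAdd (z : FM)
        = replicate (d + 2) h := congrArg Multiplicative.toAdd hcoe
    have hy : Multiplicative.toAdd (y : FM)
        = replicate (Multiset.card (Multiplicative.toAdd (y : FM))) h :=
      eq_replicate_card.mpr (fun b hb => eq_of_mem_replicate
        (hadd ▸ Multiset.mem_add.mpr (Or.inl hb)))
    have hz : Multiplicative.toAdd (z : FM)
        = replicate (Multiset.card (Multiplicative.toAdd (z : FM))) h :=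
      eq_replicate_card.mpr (fun b hb => eq_of_mem_replicate
        (hadd ▸ Multiset.mem_add.mpr (Or.inr hb)))
    set cy := Multiset.card (Multiplicative.toAdd (y : FM)) with hcy
    set cz := Multiset.card (Multiplicative.toAdd (z : FM)) with hcz
    have hcard : cy + cz = d + 2 := by
      have := congrArg Multiset.card hadd
      simpa using this
    have hsumy : (Multiplicative.toAdd (y : FM)).sum = 0 := y.2.2
    rw [hy, sum_replicate] at hsumy
    have hdvd : (d + 2) ∣ cy := by
      rw [← hh]
      exact addOrderOf_dvd_iff_nsmul_eq_zero.mpr hsumy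
    rcases Nat.eq_zero_or_pos cy with h0 | hpos
    · left
      rw [zsm_isUnit_iff_eq_one]
      exact zsm_unit_of_toAdd_eq_zero y (by rw [hy, h0, replicate_zero])
    · right
      rw [zsm_isUnit_iff_eq_one]
      have hle : d + 2 ≤ cy := Nat.le_of_dvd hpos hdvd
      have : cz = 0 := by omega
      exact zsm_unit_of_toAdd_eq_zero z (by rw [hz, this, replicate_zero])

variable (g : G) (d : ℕ)

/-- The three atoms. -/
def XA (hg : addOrderOf g = d + 2) : ↥(ZeroSumMonoid ({g, -g} : Set G)) :=
  ⟨EE g (d + 2) 0, mem_EE (by rw [← hg]; simp [addOrderOf_nsmul_eq_zero])⟩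

def XB (hg : addOrderOf g = d + 2) : ↥(ZeroSumMonoid ({g, -g} : Set G)) :=
  ⟨EE g 0 (d + 2), mem_EE (by
    have : addOrderOf (-g) = d + 2 := by rw [addOrderOf_neg, hg]
    rw [← this]; simp [addOrderOf_nsmul_eq_zero])⟩

def XC : ↥(ZeroSumMonoid ({g, -g} : Set G)) :=
  ⟨EE g 1 1, mem_EE (by simp)⟩

variable {g d}

lemma g_ne_zero (hd : 0 < d) (hg : addOrderOf g = d + 2) : g ≠ 0 := by
  intro h
  rw [h, addOrderOf_zero] at hg
  omega

lemma g_ne_neg (hd : 0 < d) (hg : addOrderOf g = d + 2) : g ≠ -g := by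
  intro h
  have h2 : (2 : ℕ) • g = 0 := by
    rw [two_nsmul]
    nth_rewrite 2 [h]
    exact add_neg_cancel g
  have := addOrderOf_dvd_iff_nsmul_eq_zero.mpr h2
  rw [hg] at this
  have := Nat.le_of_dvd (by omega) this
  omega

lemma irreducible_XA (hg : addOrderOf g = d + 2) : Irreducible (XA g d hg) :=
  irreducible_rep g hg _ (by
    show EE g (d + 2) 0 = _
    unfold EE
    rw [replicate_zero, add_zero])

lemma irreducible_XB (hg : addOrderOf g = d + 2) : Irreducible (XB g d hg) :=
  irreducible_rep (-g) (by rw [addOrderOf_neg, hg]) _ (by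
    show EE g 0 (d + 2) = _
    unfold EE
    rw [replicate_zero, zero_add])

lemma irreducible_XC (hd : 0 < d) (hg : addOrderOf g = d + 2) :
    Irreducible (XC g) := by
  have hg0 := g_ne_zero hd hg
  have hng0 : -g ≠ 0 := fun h => hg0 (by rw [← neg_neg g, h, neg_zero])
  constructor
  · rw [zsm_isUnit_iff_eq_one]
    intro h1
    have h2 : EE g 0 0 = EE g 1 1 := by
      rw [EE_one]; exact congrArg Subtype.val h1.symm
    have := (EE_inj (g_ne_neg hd hg) h2).1
    omega
  · intro y z hyz
    have hcoe : (y : FM) * (z : FM) = EE g 1 1 := by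
      rw [show EE g 1 1 = ((XC g : ↥(ZeroSumMonoid ({g, -g} : Set G))) : FM) from rfl, hyz]
      rfl
    have hadd : Multiplicative.toAdd (y : FM) + Multiplicative.toAdd (z : FM)
        = replicate 1 g + replicate 1 (-g) := congrArg Multiplicative.toAdd hcoe
    have hcard : Multiset.card (Multiplicative.toAdd (y : FM))
        + Multiset.card (Multiplicative.toAdd (z : FM)) = 2 := by
      have := congrArg Multiset.card hadd
      simpa using this
    -- a zero-sum element cannot have card 1
    have key : ∀ w : ↥(ZeroSumMonoid ({g, -g} : Set G)),
        Multiset.card (Multiplicative.toAdd (w : FM)) ≠ 1 := by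
      intro w hw
      obtain ⟨c, hc⟩ := Multiset.card_eq_one.mp hw
      have hsum : (Multiplicative.toAdd (w : FM)).sum = 0 := w.2.2
      rw [hc, Multiset.sum_singleton] at hsum
      have hcmem := w.2.1 c (by rw [hc]; exact Multiset.mem_singleton_self c)
      rcases hcmem with h | h
      · exact hg0 (by rw [← h]; exact hsum)
      · exact hng0 (by rw [← h]; exact hsum)
    rcases Nat.eq_zero_or_pos (Multiset.card (Multiplicative.toAdd (y : FM))) with h0 | hpos
    · left
      rw [zsm_isUnit_iff_eq_one]
      exact zsm_unit_of_toAdd_eq_zero y (Multiset.card_eq_zero.mp h0)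
    · right
      rw [zsm_isUnit_iff_eq_one]
      have hy1 := key y
      have hz1 := key z
      have : Multiset.card (Multiplicative.toAdd (z : FM)) = 0 := by omega
      exact zsm_unit_of_toAdd_eq_zero z (Multiset.card_eq_zero.mp this)

end Atoms

section Classify
open Multiset
variable {G : Type*} [AddCommGroup G] {g : G} {d : ℕ}

local notation "FM" => Multiplicative (Multiset G)

lemma sum_of_mem {a b : ℕ} (x : ↥(ZeroSumMonoid ({g, -g} : Set G)))
    (hx : (x : FM) = EE g a b) : a • g + b • (-g) = 0 := by
  have hsum : (Multiplicative.toAdd (x : FM)).sum = 0 := x.2.2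
  rw [hx, toAdd_EE, Multiset.sum_add, sum_replicate, sum_replicate] at hsum
  exact hsum

lemma atom_classification (hd : 0 < d) (hg : addOrderOf g = d + 2)
    (x : ↥(ZeroSumMonoid ({g, -g} : Set G))) (hirr : Irreducible x) :
    x = XA g d hg ∨ x = XB g d hg ∨ x = XC g := by
  have hgg := g_ne_neg hd hg
  obtain ⟨a, b, hx⟩ := exists_EE x
  have hz := sum_of_mem x hx
  rcases Nat.eq_zero_or_pos a with ha | ha
  · -- a = 0 : x is a power of XB
    subst ha
    rcases Nat.eq_zero_or_pos b with hb | hb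
    · exfalso
      apply hirr.not_isUnit
      rw [zsm_isUnit_iff_eq_one]
      apply Subtype.ext
      rw [hx, hb, EE_one]
      rfl
    · right; left
      rw [zero_smul, zero_add] at hz
      have hdvd : (d + 2) ∣ b := by
        rw [← hg, ← addOrderOf_neg]
        exact addOrderOf_dvd_iff_nsmul_eq_zero.mpr hz
      obtain ⟨c, hc⟩ := hdvd
      have hc1 : 1 ≤ c := by
        rcases Nat.eq_zero_or_pos c with h0 | h1
        · subst h0; rw [Nat.mul_zero] at hc; omega
        · exact h1
      have hb2 : b = (d + 2) + (d + 2) * (c - 1) := by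
        rw [hc]; cases c with
        | zero => omega
        | succ c' => simp [Nat.mul_succ, Nat.mul_comm]; ring
      have hrestz : (0 : ℕ) • g + ((d + 2) * (c - 1)) • (-g) = 0 := by
        rw [zero_smul, zero_add]
        rw [← addOrderOf_dvd_iff_nsmul_eq_zero, addOrderOf_neg, hg]
        exact Dvd.intro _ rfl
      set rest : ↥(ZeroSumMonoid ({g, -g} : Set G)) := ⟨EE g 0 ((d + 2) * (c - 1)), mem_EE hrestz⟩
      have hsplit : x = XB g d hg * rest := by
        apply Subtype.ext
        show (x : FM) = EE g 0 (d + 2) * EE g 0 ((d + 2) * (c - 1))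
        rw [EE_mul, hx, hb2]
      rcases hirr.isUnit_or_isUnit hsplit with h | h
      · exact absurd h (irreducible_XB hg).not_isUnit
      · rw [zsm_isUnit_iff_eq_one] at h
        have h2 : EE g 0 ((d + 2) * (c - 1)) = EE g 0 0 := by
          rw [EE_one]; exact congrArg Subtype.val h
        have := (EE_inj hgg h2).2
        have hc2 : c = 1 := by
          rcases Nat.eq_zero_or_pos (c - 1) with h0 | h1
          · omega
          · exfalso; have := Nat.mul_eq_zero.mp this; omega
        apply Subtype.ext
        rw [hx, hb2, hc2]
        show EE g 0 (d + 2 + (d + 2) * 0) = EE g 0 (d + 2)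
        rw [Nat.mul_zero, Nat.add_zero]
  rcases Nat.eq_zero_or_pos b with hb | hb
  · -- b = 0, a > 0 : x = XA
    subst hb
    left
    rw [zero_smul, add_zero] at hz
    have hdvd : (d + 2) ∣ a := by
      rw [← hg]; exact addOrderOf_dvd_iff_nsmul_eq_zero.mpr hz
    obtain ⟨c, hc⟩ := hdvd
    have hc1 : 1 ≤ c := by
      rcases Nat.eq_zero_or_pos c with h0 | h1
      · subst h0; rw [Nat.mul_zero] at hc; omega
      · exact h1
    have ha2 : a = (d + 2) + (d + 2) * (c - 1) := by
      cases c with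
      | zero => omega
      | succ c' => rw [hc]; simp [Nat.mul_succ]; ring
    have hrestz : ((d + 2) * (c - 1)) • g + (0 : ℕ) • (-g) = 0 := by
      rw [zero_smul, add_zero]
      rw [← addOrderOf_dvd_iff_nsmul_eq_zero, hg]
      exact Dvd.intro _ rfl
    set rest : ↥(ZeroSumMonoid ({g, -g} : Set G)) := ⟨EE g ((d + 2) * (c - 1)) 0, mem_EE hrestz⟩
    have hsplit : x = XA g d hg * rest := by
      apply Subtype.ext
      show (x : FM) = EE g (d + 2) 0 * EE g ((d + 2) * (c - 1)) 0
      rw [EE_mul, hx, ha2]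
    rcases hirr.isUnit_or_isUnit hsplit with h | h
    · exact absurd h (irreducible_XA hg).not_isUnit
    · rw [zsm_isUnit_iff_eq_one] at h
      have h2 : EE g ((d + 2) * (c - 1)) 0 = EE g 0 0 := by
        rw [EE_one]; exact congrArg Subtype.val h
      have := (EE_inj hgg h2).1
      have hc2 : c = 1 := by
        rcases Nat.eq_zero_or_pos (c - 1) with h0 | h1
        · omega
        · exfalso; have := Nat.mul_eq_zero.mp this; omega
      apply Subtype.ext
      rw [hx, ha2, hc2]
      show EE g (d + 2 + (d + 2) * 0) 0 = EE g (d + 2) 0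
      rw [Nat.mul_zero, Nat.add_zero]
  · -- a > 0, b > 0 : x = XC
    right; right
    obtain ⟨a', rfl⟩ : ∃ a', a = a' + 1 := ⟨a - 1, by omega⟩
    obtain ⟨b', rfl⟩ : ∃ b', b = b' + 1 := ⟨b - 1, by omega⟩
    have hz' : a' • g + b' • (-g) = 0 := by
      have h1 : a' • g + b' • (-g) = (a' + 1) • g + (b' + 1) • (-g) := by
        rw [succ_nsmul, succ_nsmul]
        abel
      rw [h1, hz]
    set rest : ↥(ZeroSumMonoid ({g, -g} : Set G)) := ⟨EE g a' b', mem_EE hz'⟩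
    have hsplit : x = XC g * rest := by
      apply Subtype.ext
      show (x : FM) = EE g 1 1 * EE g a' b'
      rw [EE_mul, hx]
      congr 1 <;> omega
    rcases hirr.isUnit_or_isUnit hsplit with h | h
    · exact absurd h (irreducible_XC hd hg).not_isUnit
    · rw [zsm_isUnit_iff_eq_one] at h
      have h2 : EE g a' b' = EE g 0 0 := by
        rw [EE_one]; exact congrArg Subtype.val h
      obtain ⟨h3, h4⟩ := EE_inj hgg h2
      apply Subtype.ext
      rw [hx, h3, h4]
      rfl

end Classify

section Lengths
open Multiset
variable {G : Type*} [AddCommGroup G] {g : G} {d : ℕ}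

local notation "FM" => Multiplicative (Multiset G)

lemma EE_pow (g : G) (a b k : ℕ) : (EE g a b) ^ k = EE g (k * a) (k * b) := by
  unfold EE
  rw [← ofAdd_nsmul]
  congr 1
  rw [smul_add, nsmul_replicate, nsmul_replicate]

lemma prod_factorization (hd : 0 < d) (hg : addOrderOf g = d + 2)
    (s : Multiset ↥(ZeroSumMonoid ({g, -g} : Set G)))
    (hs : ∀ y ∈ s, y = XA g d hg ∨ y = XB g d hg ∨ y = XC g) :
    ∃ k l m : ℕ, Multiset.card s = k + l + m ∧
      (s.prod : FM) = EE g (k * (d + 2) + m) (l * (d + 2) + m) := by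
  induction s using Multiset.induction with
  | empty => exact ⟨0, 0, 0, by simp, by simp [EE_one]⟩
  | cons y t ih =>
    obtain ⟨k, l, m, hcard, hprod⟩ := ih (fun z hz => hs z (mem_cons_of_mem hz))
    have hy := hs y (mem_cons_self y t)
    have hpc : ((y ::ₘ t).prod : FM) = (y : FM) * (t.prod : FM) := by
      rw [Multiset.prod_cons]; rfl
    rcases hy with rfl | rfl | rfl
    · refine ⟨k + 1, l, m, by simp [hcard]; ring, ?_⟩
      rw [hpc, hprod]
      show EE g (d + 2) 0 * _ = _
      rw [EE_mul]
      congr 1 <;> ring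
    · refine ⟨k, l + 1, m, by simp [hcard]; ring, ?_⟩
      rw [hpc, hprod]
      show EE g 0 (d + 2) * _ = _
      rw [EE_mul]
      congr 1 <;> ring
    · refine ⟨k, l, m + 1, by simp [hcard]; ring, ?_⟩
      rw [hpc, hprod]
      show EE g 1 1 * _ = _
      rw [EE_mul]
      congr 1 <;> ring

lemma lengths_iff (hd : 0 < d) (hg : addOrderOf g = d + 2) (a b L : ℕ)
    (hmem : EE g a b ∈ ZeroSumMonoid ({g, -g} : Set G)) :
    L ∈ LengthsOf (⟨EE g a b, hmem⟩ : ↥(ZeroSumMonoid ({g, -g} : Set G))) ↔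
      ∃ k l m : ℕ, a = k * (d + 2) + m ∧ b = l * (d + 2) + m ∧ L = k + l + m := by
  constructor
  · rintro ⟨s, hcard, hirr, hprod⟩
    obtain ⟨k, l, m, hc, hp⟩ := prod_factorization hd hg s
      (fun y hy => atom_classification hd hg y (hirr y hy))
    rw [hprod] at hp
    obtain ⟨h1, h2⟩ := EE_inj (g_ne_neg hd hg) hp
    exact ⟨k, l, m, h1, h2, by omega⟩
  · rintro ⟨k, l, m, ha, hb, hL⟩
    refine ⟨replicate k (XA g d hg) + replicate l (XB g d hg) + replicate m (XC g),
      by simp [hL], ?_, ?_⟩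
    · intro x hx
      simp only [Multiset.mem_add] at hx
      rcases hx with (hx | hx) | hx
      · rw [eq_of_mem_replicate hx]; exact irreducible_XA hg
      · rw [eq_of_mem_replicate hx]; exact irreducible_XB hg
      · rw [eq_of_mem_replicate hx]; exact irreducible_XC hd hg
    · apply Subtype.ext
      push_cast [Multiset.prod_add, Multiset.prod_replicate]
      show (EE g (d+2) 0)^k * (EE g 0 (d+2))^l * (EE g 1 1)^m = EE g a b
      rw [EE_pow, EE_pow, EE_pow, EE_mul, EE_mul]
      congr 1 <;> omega

end Lengths


/-- If `g` has order `d+2`, then the set of distances of `B({g,-g})` is `{d}`. -/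
theorem deltaSet_zeroSumMonoid_pair {G : Type*} [AddCommGroup G] (g : G) (d : ℕ)
    (hd : 0 < d) (hg : addOrderOf g = d + 2) :
    DeltaSet ↥(ZeroSumMonoid ({g, -g} : Set G)) = {d} := by
  ext d'
  simp only [Set.mem_singleton_iff]
  constructor
  · rintro ⟨hd', x, k, hk, hk', hgap⟩
    obtain ⟨a, b, hab⟩ := exists_EE x
    have hmem : EE g a b ∈ ZeroSumMonoid ({g, -g} : Set G) := hab ▸ x.2
    have hx : x = ⟨EE g a b, hmem⟩ := Subtype.ext hab
    rw [hx] at hk hk' hgap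
    rw [lengths_iff hd hg] at hk hk'
    obtain ⟨k1, l1, m1, ha1, hb1, hL1⟩ := hk
    obtain ⟨k2, l2, m2, ha2, hb2, hL2⟩ := hk'
    have hk2le : k2 ≤ k1 := by
      by_contra hlt
      push_neg at hlt
      obtain ⟨j, hj⟩ : ∃ j, k2 = k1 + (j + 1) := ⟨k2 - k1 - 1, by omega⟩
      have e1 : k2 * (d + 2) = k1 * (d + 2) + (j + 1) * (d + 2) := by rw [hj]; ring
      have hm1 : m1 = (j + 1) * (d + 2) + m2 := by omega
      have e2 : l1 * (d + 2) + (j + 1) * (d + 2) = l2 * (d + 2) := by omega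
      have e3 : (l1 + (j + 1)) * (d + 2) = l2 * (d + 2) := by rw [add_mul]; omega
      have hl2 : l1 + (j + 1) = l2 := Nat.eq_of_mul_eq_mul_right (by omega) e3
      have e4 : 3 * (j + 1) ≤ (j + 1) * (d + 2) := by
        calc 3 * (j + 1) = (j + 1) * 3 := by ring
        _ ≤ (j + 1) * (d + 2) := Nat.mul_le_mul_left _ (by omega)
      omega
    obtain ⟨j, hj⟩ : ∃ j, k1 = k2 + j := ⟨k1 - k2, by omega⟩
    have e1 : k1 * (d + 2) = k2 * (d + 2) + j * (d + 2) := by rw [hj]; ring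
    have hm2 : m2 = j * (d + 2) + m1 := by omega
    have e3 : l1 * (d + 2) = (l2 + j) * (d + 2) := by rw [add_mul]; omega
    have hl1 : l1 = l2 + j := Nat.eq_of_mul_eq_mul_right (by omega) e3
    have ejd : j * (d + 2) = j * d + 2 * j := by ring
    have hd'eq : d' = j * d := by omega
    have hj1 : 1 ≤ j := by
      rcases Nat.eq_zero_or_pos j with h0 | h1
      · subst h0; simp at hd'eq; omega
      · exact h1
    rcases Nat.lt_or_ge j 2 with hj2 | hj2
    · have hj' : j = 1 := by omega
      rw [hj', one_mul] at hd'eq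
      exact hd'eq
    · exfalso
      have hk1pos : 1 ≤ k1 := by omega
      have hl1pos : 1 ≤ l1 := by omega
      have haI : a = (k1 - 1) * (d + 2) + (m1 + (d + 2)) := by
        have h5 : (k1 - 1) * (d + 2) + (d + 2) = k1 * (d + 2) := by
          have hh : k1 - 1 + 1 = k1 := by omega
          calc (k1 - 1) * (d + 2) + (d + 2) = (k1 - 1 + 1) * (d + 2) := by ring
          _ = k1 * (d + 2) := by rw [hh]
        omega
      have hbI : b = (l1 - 1) * (d + 2) + (m1 + (d + 2)) := by
        have h5 : (l1 - 1) * (d + 2) + (d + 2) = l1 * (d + 2) := by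
          have hh : l1 - 1 + 1 = l1 := by omega
          calc (l1 - 1) * (d + 2) + (d + 2) = (l1 - 1 + 1) * (d + 2) := by ring
          _ = l1 * (d + 2) := by rw [hh]
        omega
      have hmemI : (k1 - 1) + (l1 - 1) + (m1 + (d + 2)) ∈
          LengthsOf (⟨EE g a b, hmem⟩ : ↥(ZeroSumMonoid ({g, -g} : Set G))) :=
        (lengths_iff hd hg a b _ hmem).mpr ⟨k1 - 1, l1 - 1, m1 + (d + 2), haI, hbI, rfl⟩
      have hgap' := hgap _ hmemI
      have hl0 : (k1 - 1) + (l1 - 1) + (m1 + (d + 2)) = k + d := by omega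
      have hdd' : d < d' := by
        have : 2 * d ≤ j * d := Nat.mul_le_mul_right d hj2
        omega
      exact hgap' ⟨by omega, by omega⟩
  · intro h
    rw [h]
    have hmem : EE g (d + 2) (d + 2) ∈ ZeroSumMonoid ({g, -g} : Set G) :=
      mem_EE (by rw [smul_neg]; exact add_neg_cancel _)
    refine ⟨hd, ⟨EE g (d + 2) (d + 2), hmem⟩, 2, ?_, ?_, ?_⟩
    · exact (lengths_iff hd hg _ _ _ hmem).mpr ⟨1, 1, 0, by ring, by ring, by omega⟩
    · exact (lengths_iff hd hg _ _ _ hmem).mpr ⟨0, 0, d + 2, by ring, by ring, by omega⟩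
    · intro ℓ hℓ
      obtain ⟨k, l, m, h1, h2, h3⟩ := (lengths_iff hd hg _ _ _ hmem).mp hℓ
      rintro ⟨hlow, hhigh⟩
      rcases k with _ | k'
      · -- k = 0, so m = d + 2
        have hm : m = d + 2 := by omega
        rcases l with _ | l'
        · omega
        · have e : (l' + 1) * (d + 2) = l' * (d + 2) + (d + 2) := by ring
          omega
      · have e : (k' + 1) * (d + 2) = k' * (d + 2) + (d + 2) := by ring
        have hm : m = 0 ∧ k' * (d + 2) = 0 := by omega
        have hk'0 : k' = 0 := by
          rcases Nat.mul_eq_zero.mp hm.2 with h | h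
          · exact h
          · omega
        rcases l with _ | l'
        · omega
        · have e2 : (l' + 1) * (d + 2) = l' * (d + 2) + (d + 2) := by ring
          have hl'0 : l' = 0 := by
            have : l' * (d + 2) = 0 := by omega
            rcases Nat.mul_eq_zero.mp this with h | h
            · exact h
            · omega
          omega
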